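/- For positive reals a, b, c, d, a/(a^3 + 63bcd)^(1/3) + b/(b^3 + 63acd)^(1/3) + c/(c^3 + 63abd)^(1/3) + d/(d^3 + 63abc)^(1/3) ≥ 1. -/

import Mathlib

private lemma cauchy2 (x y u v : ℝ) (hu : 0 < u) (hv : 0 < v) :
    (x + y)^2 / (u + v) ≤ x^2 / u + y^2 / v := by
  rw [div_add_div _ _ (ne_of_gt hu) (ne_of_gt hv), div_le_div_iff₀ (by positivity) (by positivity)]
  nlinarith [sq_nonneg (x * v - y * u), mul_pos hu hv]

private lemma engel4 (x1 x2 x3 x4 u1 u2 u3 u4 : ℝ)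
    (h1 : 0 < u1) (h2 : 0 < u2) (h3 : 0 < u3) (h4 : 0 < u4) :
    (x1 + x2 + x3 + x4)^2 / (u1 + u2 + u3 + u4)
      ≤ x1^2 / u1 + x2^2 / u2 + x3^2 / u3 + x4^2 / u4 := by
  calc (x1 + x2 + x3 + x4)^2 / (u1 + u2 + u3 + u4)
      ≤ (x1 + x2 + x3)^2 / (u1 + u2 + u3) + x4^2 / u4 := by
        have := cauchy2 (x1 + x2 + x3) x4 (u1 + u2 + u3) u4 (by positivity) h4
        linarith
    _ ≤ ((x1 + x2)^2 / (u1 + u2) + x3^2 / u3) + x4^2 / u4 := by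
        have := cauchy2 (x1 + x2) x3 (u1 + u2) u3 (by positivity) h3
        linarith
    _ ≤ ((x1^2 / u1 + x2^2 / u2) + x3^2 / u3) + x4^2 / u4 := by
        have := cauchy2 x1 x2 u1 u2 h1 h2
        linarith
    _ = x1^2 / u1 + x2^2 / u2 + x3^2 / u3 + x4^2 / u4 := by ring

private lemma radon4 (x1 x2 x3 x4 u1 u2 u3 u4 : ℝ)
    (hx1 : 0 ≤ x1) (hx2 : 0 ≤ x2) (hx3 : 0 ≤ x3) (hx4 : 0 ≤ x4)
    (h1 : 0 < u1) (h2 : 0 < u2) (h3 : 0 < u3) (h4 : 0 < u4) :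
    (x1 + x2 + x3 + x4)^4 / (u1 + u2 + u3 + u4)^3
      ≤ x1^4 / u1^3 + x2^4 / u2^3 + x3^4 / u3^3 + x4^4 / u4^3 := by
  have hU : 0 < u1 + u2 + u3 + u4 := by positivity
  have hA : (x1 + x2 + x3 + x4)^2 / (u1 + u2 + u3 + u4)
      ≤ x1^2 / u1 + x2^2 / u2 + x3^2 / u3 + x4^2 / u4 :=
    engel4 x1 x2 x3 x4 u1 u2 u3 u4 h1 h2 h3 h4
  have hB : (x1^2 / u1 + x2^2 / u2 + x3^2 / u3 + x4^2 / u4)^2 / (u1 + u2 + u3 + u4)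
      ≤ (x1^2 / u1)^2 / u1 + (x2^2 / u2)^2 / u2 + (x3^2 / u3)^2 / u3 + (x4^2 / u4)^2 / u4 :=
    engel4 _ _ _ _ u1 u2 u3 u4 h1 h2 h3 h4
  have hrw : ∀ x u : ℝ, 0 < u → (x^2 / u)^2 / u = x^4 / u^3 := by
    intro x u hu; field_simp
  rw [hrw x1 u1 h1, hrw x2 u2 h2, hrw x3 u3 h3, hrw x4 u4 h4] at hB
  have hnn : 0 ≤ (x1 + x2 + x3 + x4)^2 / (u1 + u2 + u3 + u4) := by positivity
  have hstep : ((x1 + x2 + x3 + x4)^2 / (u1 + u2 + u3 + u4))^2 / (u1 + u2 + u3 + u4)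
      ≤ (x1^2 / u1 + x2^2 / u2 + x3^2 / u3 + x4^2 / u4)^2 / (u1 + u2 + u3 + u4) := by
    gcongr
  have heq : ((x1 + x2 + x3 + x4)^2 / (u1 + u2 + u3 + u4))^2 / (u1 + u2 + u3 + u4)
      = (x1 + x2 + x3 + x4)^4 / (u1 + u2 + u3 + u4)^3 := by
    field_simp
  linarith [heq ▸ hstep]

private lemma hpoly_lem (a b c d : ℝ) (ha : 0 < a) (hb : 0 < b) (hc : 0 < c) (hd : 0 < d) :
    a * (a^3 + 63*b*c*d) + b * (b^3 + 63*a*c*d) + c * (c^3 + 63*a*b*d)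
      + d * (d^3 + 63*a*b*c) ≤ (a + b + c + d)^4 := by
  nlinarith [mul_nonneg (mul_nonneg ha.le hb.le) (sq_nonneg (a-b)),
    mul_nonneg (mul_nonneg ha.le hc.le) (sq_nonneg (a-c)),
    mul_nonneg (mul_nonneg ha.le hd.le) (sq_nonneg (a-d)),
    mul_nonneg (mul_nonneg hb.le hc.le) (sq_nonneg (b-c)),
    mul_nonneg (mul_nonneg hb.le hd.le) (sq_nonneg (b-d)),
    mul_nonneg (mul_nonneg hc.le hd.le) (sq_nonneg (c-d)),
    mul_nonneg (mul_nonneg hb.le hc.le) (sq_nonneg (a-d)),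
    mul_nonneg (mul_nonneg hb.le hd.le) (sq_nonneg (a-c)),
    mul_nonneg (mul_nonneg hc.le hd.le) (sq_nonneg (a-b)),
    mul_nonneg (mul_nonneg ha.le hc.le) (sq_nonneg (b-d)),
    mul_nonneg (mul_nonneg ha.le hd.le) (sq_nonneg (b-c)),
    mul_nonneg (mul_nonneg ha.le hb.le) (sq_nonneg (c-d)),
    sq_nonneg (a*b - c*d), sq_nonneg (a*c - b*d), sq_nonneg (a*d - b*c)]

theorem stmt_9 (a b c d : ℝ) (ha : 0 < a) (hb : 0 < b) (hc : 0 < c) (hd : 0 < d) :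
    a/(a^3 + 63*b*c*d)^((1:ℝ)/3) + b/(b^3 + 63*a*c*d)^((1:ℝ)/3)
      + c/(c^3 + 63*a*b*d)^((1:ℝ)/3) + d/(d^3 + 63*a*b*c)^((1:ℝ)/3) ≥ 1 := by
  have hea : (0:ℝ) < a^3 + 63*b*c*d := by positivity
  have heb : (0:ℝ) < b^3 + 63*a*c*d := by positivity
  have hec : (0:ℝ) < c^3 + 63*a*b*d := by positivity
  have hed : (0:ℝ) < d^3 + 63*a*b*c := by positivity
  set Xa := (a^3 + 63*b*c*d)^((1:ℝ)/3) with hXa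
  set Xb := (b^3 + 63*a*c*d)^((1:ℝ)/3) with hXb
  set Xc := (c^3 + 63*a*b*d)^((1:ℝ)/3) with hXc
  set Xd := (d^3 + 63*a*b*c)^((1:ℝ)/3) with hXd
  have hcube : ∀ e : ℝ, 0 < e → (e ^ ((1:ℝ)/3))^3 = e := by
    intro e he
    rw [← Real.rpow_natCast (e ^ ((1:ℝ)/3)) 3, ← Real.rpow_mul he.le]
    norm_num
  have hXa3 : Xa^3 = a^3 + 63*b*c*d := hcube _ hea
  have hXb3 : Xb^3 = b^3 + 63*a*c*d := hcube _ heb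
  have hXc3 : Xc^3 = c^3 + 63*a*b*d := hcube _ hec
  have hXd3 : Xd^3 = d^3 + 63*a*b*c := hcube _ hed
  have hXap : 0 < Xa := Real.rpow_pos_of_pos hea _
  have hXbp : 0 < Xb := Real.rpow_pos_of_pos heb _
  have hXcp : 0 < Xc := Real.rpow_pos_of_pos hec _
  have hXdp : 0 < Xd := Real.rpow_pos_of_pos hed _
  set ua := a / Xa with hua
  set ub := b / Xb with hub
  set uc := c / Xc with huc
  set ud := d / Xd with hud
  have huap : 0 < ua := by positivity
  have hubp : 0 < ub := by positivity
  have hucp : 0 < uc := by positivity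
  have hudp : 0 < ud := by positivity
  have hval : ∀ x X : ℝ, 0 < x → 0 < X → x^4 / (x / X)^3 = x * X^3 := by
    intro x X hx hX; field_simp
  have hrad := radon4 a b c d ua ub uc ud ha.le hb.le hc.le hd.le huap hubp hucp hudp
  rw [hua, hub, huc, hud] at hrad
  rw [hval a Xa ha hXap, hval b Xb hb hXbp, hval c Xc hc hXcp, hval d Xd hd hXdp] at hrad
  rw [hXa3, hXb3, hXc3, hXd3] at hrad
  have hpoly : a * (a^3 + 63*b*c*d) + b * (b^3 + 63*a*c*d) + c * (c^3 + 63*a*b*d)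
      + d * (d^3 + 63*a*b*c) ≤ (a + b + c + d)^4 := hpoly_lem a b c d ha hb hc hd
  set S := a / Xa + b / Xb + c / Xc + d / Xd with hS
  have hSp : 0 < S := by rw [hS]; positivity
  have hS4 : (a + b + c + d)^4 / S^3 ≤ (a + b + c + d)^4 := le_trans hrad hpoly
  have habcd : (0:ℝ) < (a + b + c + d)^4 := by positivity
  have hS3 : 1 ≤ S^3 := by
    rw [div_le_iff₀ (by positivity)] at hS4
    exact (le_mul_iff_one_le_right habcd).mp hS4
  by_contra hcon
  push_neg at hcon
  have : S^3 < 1 := pow_lt_one₀ hSp.le (by linarith) (by norm_num)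
  linarith
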